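/- arXiv:1806.01969 — 4 statements merged into one kernel-verified Lean document; each statement's English description precedes it below -/
import Mathlib

section
/- For every d ≥ 1 there exists a least-squares problem (X, y) with X ∈ ℝ^{(d+1)×d} and y ∈ ℝ^{d+1} such that for every size-d subset S ⊆ {1..d+1}, the interpolating solution w*(S) satisfies L(w*(S)) = (d+1) · L(w*), where L(w) = ‖Xw − y‖² and w* is the least-squares minimizer. Concretely, take the rows of X to be the d+1 vertices of a regular simplex centered at the origin in ℝ^d and y = α·1 for any α ≠ 0. -/
open Matrix Finset

noncomputable section

/-- The submatrix of `X` consisting of the rows indexed by the subset `S`. -/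
def rowSub {n d : ℕ} (X : Matrix (Fin n) (Fin d) ℝ) (S : Finset (Fin n)) :
    Matrix {i // i ∈ S} (Fin d) ℝ :=
  X.submatrix (fun i => (i : Fin n)) id

/-- `X_S^⊤ X_S`. -/
def gram {n d : ℕ} (X : Matrix (Fin n) (Fin d) ℝ) (S : Finset (Fin n)) :
    Matrix (Fin d) (Fin d) ℝ :=
  (rowSub X S)ᵀ * rowSub X S

/-- The total square loss `L(w) = ‖Xw − y‖²`. -/
def loss {n d : ℕ} (X : Matrix (Fin n) (Fin d) ℝ) (y : Fin n → ℝ) (w : Fin d → ℝ) : ℝ :=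
  ∑ j, (X.mulVec w j - y j) ^ 2

def Xmat (d : ℕ) : Matrix (Fin (d + 1)) (Fin d) ℝ :=
  fun j k => if (j : ℕ) = (k : ℕ) then 1 else if (j : ℕ) = d then -1 else 0

lemma Xmat_mulVec_castSucc (d : ℕ) (w : Fin d → ℝ) (k : Fin d) :
    (Xmat d).mulVec w k.castSucc = w k := by
  unfold Xmat Matrix.mulVec dotProduct
  rw [Finset.sum_eq_single k]
  · simp
  · intro b _ hb
    dsimp only
    rw [if_neg, if_neg, zero_mul]
    · simp only [Fin.coe_castSucc]; omega
    · simp only [Fin.coe_castSucc]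
      exact fun h => hb (Fin.ext h.symm)
  · simp

lemma Xmat_mulVec_last (d : ℕ) (w : Fin d → ℝ) :
    (Xmat d).mulVec w (Fin.last d) = -∑ k, w k := by
  unfold Xmat Matrix.mulVec dotProduct
  rw [← Finset.sum_neg_distrib]
  apply Finset.sum_congr rfl
  intro k _
  dsimp only
  rw [if_neg, if_pos (Fin.val_last d)]
  · ring
  · simp only [Fin.val_last]; omega

lemma Xmat_sum_res (d : ℕ) (w : Fin d → ℝ) :
    ∑ j, ((Xmat d).mulVec w j - 1) = -((d : ℝ) + 1) := by
  rw [Fin.sum_univ_castSucc]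
  simp only [Xmat_mulVec_castSucc, Xmat_mulVec_last]
  rw [Finset.sum_sub_distrib]
  simp
  ring

/-- Tightness of the factor `d+1`: for every `d ≥ 1` there is a least squares problem
`(X, y)` with `d+1` rows, in general position and with nonzero optimal loss, such that
every size-`d` interpolating solution has loss exactly `(d+1)` times the optimal loss. -/
theorem factor_d_plus_one_tight (d : ℕ) (hd : 1 ≤ d) :
    ∃ (X : Matrix (Fin (d + 1)) (Fin d) ℝ) (y : Fin (d + 1) → ℝ),
      (∀ S : Finset (Fin (d + 1)), S.card = d → (gram X S).det ≠ 0) ∧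
      (∀ w, loss X y w ≠ 0) ∧
      ∀ w : Fin d → ℝ, (∀ v, loss X y w ≤ loss X y v) →
        ∀ S : Finset (Fin (d + 1)), S.card = d →
          ∀ wS : Fin d → ℝ, (∀ j ∈ S, X.mulVec wS j = y j) →
            loss X y wS = ((d : ℝ) + 1) * loss X y w := by
  refine ⟨Xmat d, fun _ => 1, ?_, ?_, ?_⟩
  · -- gram determinants nonzero
    intro S hS hdet
    obtain ⟨v, hvne, hveq⟩ := (Matrix.exists_mulVec_eq_zero_iff).2 hdet
    -- Extract one missing index
    have hcompl : Sᶜ.card = 1 := by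
      rw [Finset.card_compl, hS]
      simp
    obtain ⟨i₀, hi₀⟩ := Finset.card_eq_one.1 hcompl
    have hmem : ∀ j : Fin (d + 1), j ≠ i₀ → j ∈ S := by
      intro j hj
      by_contra h
      have : j ∈ Sᶜ := Finset.mem_compl.2 h
      rw [hi₀, Finset.mem_singleton] at this
      exact hj this
    -- A *ᵥ v = 0
    have hAv : (rowSub (Xmat d) S) *ᵥ v = 0 := by
      have := (Matrix.ker_mulVecLin_transpose_mul_self (rowSub (Xmat d) S)).le
      unfold _root_.gram at hveq
      have h1 : v ∈ LinearMap.ker ((rowSub (Xmat d) S)ᵀ * rowSub (Xmat d) S).mulVecLin := by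
        rw [LinearMap.mem_ker, Matrix.mulVecLin_apply]
        exact hveq
      have h2 := this h1
      rw [LinearMap.mem_ker, Matrix.mulVecLin_apply] at h2
      exact h2
    have hrow : ∀ j ∈ S, (Xmat d).mulVec v j = 0 := by
      intro j hj
      have := congrFun hAv ⟨j, hj⟩
      simpa [rowSub, Matrix.submatrix, Matrix.mulVec, dotProduct] using this
    apply hvne
    funext k
    by_cases hk : k.castSucc ∈ S
    · have := hrow _ hk
      rwa [Xmat_mulVec_castSucc] at this
    · have hki : k.castSucc = i₀ := by
        by_contra h
        exact hk (hmem _ h)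
      have hlast : Fin.last d ∈ S := by
        apply hmem
        rw [← hki]
        intro h
        have := congrArg Fin.val h
        simp only [Fin.val_last, Fin.coe_castSucc] at this
        omega
      have hsum : ∑ m, v m = 0 := by
        have := hrow _ hlast
        rw [Xmat_mulVec_last] at this
        linarith
      have hothers : ∀ m : Fin d, m ≠ k → v m = 0 := by
        intro m hm
        have hmS : m.castSucc ∈ S := by
          apply hmem
          rw [← hki]
          exact fun h => hm (Fin.castSucc_injective d h)
        have := hrow _ hmS
        rwa [Xmat_mulVec_castSucc] at this
      have : ∑ m, v m = v k := by
        rw [Finset.sum_eq_single k]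
        · exact fun b _ hb => hothers b hb
        · simp
      rw [← this, hsum]
      rfl
  · -- loss never zero
    intro w h0
    have hnn : ∀ j ∈ (univ : Finset (Fin (d+1))), 0 ≤ ((Xmat d).mulVec w j - 1) ^ 2 :=
      fun j _ => sq_nonneg _
    have := (Finset.sum_eq_zero_iff_of_nonneg hnn).1 h0
    have hz : ∀ j, (Xmat d).mulVec w j - 1 = 0 := by
      intro j
      have := this j (Finset.mem_univ j)
      exact pow_eq_zero_iff (by norm_num) |>.1 this
    have := Xmat_sum_res d w
    rw [Finset.sum_congr rfl (fun j _ => hz j)] at this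
    simp at this
    have : (0:ℝ) < (d:ℝ) + 1 := by positivity
    linarith
  · -- main claim
    intro w hw S hS wS hwS
    -- loss at 0 is d+1
    have h0 : loss (Xmat d) (fun _ => 1) 0 = (d : ℝ) + 1 := by
      unfold loss
      simp [Matrix.mulVec_zero]
    -- lower bound: loss w ≥ d+1 for all w
    have hlb : ∀ v : Fin d → ℝ, (d : ℝ) + 1 ≤ loss (Xmat d) (fun _ => 1) v := by
      intro v
      have hcs := sq_sum_le_card_mul_sum_sq (s := (univ : Finset (Fin (d+1))))
        (f := fun j => (Xmat d).mulVec v j - 1)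
      rw [Xmat_sum_res] at hcs
      have hcard : ((univ : Finset (Fin (d+1))).card : ℝ) = (d : ℝ) + 1 := by simp
      rw [hcard] at hcs
      have hpos : (0:ℝ) < (d:ℝ) + 1 := by positivity
      have hl : ((d:ℝ)+1)^2 ≤ ((d:ℝ)+1) * loss (Xmat d) (fun _ => 1) v := by
        calc ((d:ℝ)+1)^2 = (-((d:ℝ)+1))^2 := by ring
        _ ≤ _ := hcs
      nlinarith
    have hwloss : loss (Xmat d) (fun _ => 1) w = (d : ℝ) + 1 :=
      le_antisymm (h0 ▸ hw 0) (hlb w)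
    -- structure of S
    have hcompl : Sᶜ.card = 1 := by
      rw [Finset.card_compl, hS]
      simp
    obtain ⟨i₀, hi₀⟩ := Finset.card_eq_one.1 hcompl
    -- residual at i₀ is -(d+1)
    have hsplit := Finset.sum_compl_add_sum S (fun j => (Xmat d).mulVec wS j - 1)
    rw [hi₀, Finset.sum_singleton, Xmat_sum_res] at hsplit
    have hSzero : ∀ j ∈ S, (Xmat d).mulVec wS j - 1 = 0 := by
      intro j hj
      rw [hwS j hj]
      ring
    rw [Finset.sum_eq_zero hSzero, add_zero] at hsplit
    -- compute loss wS
    have hlossS : loss (Xmat d) (fun _ => 1) wS = ((d:ℝ)+1)^2 := by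
      unfold loss
      rw [← Finset.sum_compl_add_sum S, hi₀, Finset.sum_singleton, hsplit]
      rw [Finset.sum_eq_zero (fun j hj => by rw [hSzero j hj]; ring), add_zero]
      ring
    rw [hlossS, hwloss]
    ring
end
end

section
/- Let X ∈ ℝ^{n×d}, λ ≥ 0, and d_λ = tr(X(X^⊤X + λI)^{−1}X^⊤). Suppose S is generated by λ-regularized reverse iterative volume sampling down to size s ≥ d_λ (at each step removing i ∈ S with probability proportional to det(X_{S∖{i}}^⊤X_{S∖{i}} + λI)/det(X_S^⊤X_S + λI)). Then E[(X_S^⊤X_S + λI)^{−1}] ⪯ ((n − d_λ + 1)/(s − d_λ + 1)) · (X^⊤X + λI)^{−1} in the Loewner order. -/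
open Matrix Finset

noncomputable section

/-- The unnormalized weight `det(X_{S∖{i}}^⊤X_{S∖{i}} + λI)/det(X_S^⊤X_S + λI)` of
removing row `i` from `S` in λ-regularized reverse iterative volume sampling. -/
def remWeight {n d : ℕ} (X : Matrix (Fin n) (Fin d) ℝ) (lam : ℝ) (S : Finset (Fin n))
    (i : Fin n) : ℝ :=
  (gram X (S.erase i) + lam • (1 : Matrix (Fin d) (Fin d) ℝ)).det /
    (gram X S + lam • (1 : Matrix (Fin d) (Fin d) ℝ)).det

/-- The conditional probability `P(S∖{i} | S)` of removing row `i` from `S`. -/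
def remProb {n d : ℕ} (X : Matrix (Fin n) (Fin d) ℝ) (lam : ℝ) (S : Finset (Fin n))
    (i : Fin n) : ℝ :=
  remWeight X lam S i / ∑ j ∈ S, remWeight X lam S j

/-- The probability that λ-regularized reverse iterative volume sampling, started from
`{1..n}`, passes through the subset `S`. -/
def reachProb {n d : ℕ} (X : Matrix (Fin n) (Fin d) ℝ) (lam : ℝ)
    (S : Finset (Fin n)) : ℝ :=
  if h : S = Finset.univ then 1
  else ∑ i ∈ Sᶜ.attach, reachProb X lam (insert i.1 S) * remProb X lam (insert i.1 S) i.1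
termination_by n - S.card
decreasing_by
  have hi : (i.1 : Fin n) ∉ S := by
    have h2 := i.2
    simp only [Finset.mem_compl] at h2
    exact h2
  have h1 : (insert i.1 S).card = S.card + 1 := Finset.card_insert_of_notMem hi
  have h2 : S.card < n := by
    have h3 : S ⊂ Finset.univ := Finset.ssubset_univ_iff.mpr h
    have h4 := Finset.card_lt_card h3
    simpa using h4
  omega


namespace VS
variable {n d : ℕ}

/-- helper: PSD from symmetry + quadratic form -/
lemma psd_of {M : Matrix (Fin d) (Fin d) ℝ} (h : Mᵀ = M)
    (h2 : ∀ x : Fin d → ℝ, 0 ≤ x ⬝ᵥ M *ᵥ x) : M.PosSemidef := by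
  refine Matrix.PosSemidef.of_dotProduct_mulVec_nonneg ?_ ?_
  · rw [Matrix.IsHermitian, conjTranspose_eq_transpose_of_trivial]; exact h
  · intro x; simpa using h2 x

lemma psd_symm {M : Matrix (Fin d) (Fin d) ℝ} (h : M.PosSemidef) : Mᵀ = M := by
  have := h.1; rwa [Matrix.IsHermitian, conjTranspose_eq_transpose_of_trivial] at this

lemma psd_form {M : Matrix (Fin d) (Fin d) ℝ} (h : M.PosSemidef) (x : Fin d → ℝ) :
    0 ≤ x ⬝ᵥ M *ᵥ x := by simpa using h.dotProduct_mulVec_nonneg x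

lemma psd_smul {M : Matrix (Fin d) (Fin d) ℝ} (h : M.PosSemidef) {c : ℝ} (hc : 0 ≤ c) :
    (c • M).PosSemidef := by
  refine psd_of (by rw [transpose_smul, psd_symm h]) (fun x => ?_)
  rw [smul_mulVec, dotProduct_smul, smul_eq_mul]
  exact mul_nonneg hc (psd_form h x)

lemma psd_sum {ι : Type*} {s : Finset ι} {f : ι → Matrix (Fin d) (Fin d) ℝ}
    (h : ∀ i ∈ s, (f i).PosSemidef) : (∑ i ∈ s, f i).PosSemidef := by
  classical
  induction s using Finset.induction with
  | empty => simpa using Matrix.PosSemidef.zero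
  | insert _ _ hx ih =>
    rw [Finset.sum_insert hx]
    exact ((h _ (Finset.mem_insert_self _ _)).add
      (ih (fun i hi => h i (Finset.mem_insert_of_mem hi))))

open scoped MatrixOrder in
lemma psd_det_nonneg {M : Matrix (Fin d) (Fin d) ℝ} (h : M.PosSemidef) : 0 ≤ M.det := by
  have h1 : M = CFC.sqrt M * CFC.sqrt M := (CFC.sqrt_mul_sqrt_self M h.nonneg).symm
  rw [h1, det_mul]
  exact mul_self_nonneg _


lemma gram_apply (X : Matrix (Fin n) (Fin d) ℝ) (S : Finset (Fin n)) (a b : Fin d) :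
    gram X S a b = ∑ i ∈ S, X i a * X i b := by
  classical
  rw [_root_.gram, Matrix.mul_apply, ← Finset.sum_coe_sort S (fun i => X i a * X i b)]
  rfl

lemma gram_univ (X : Matrix (Fin n) (Fin d) ℝ) : gram X Finset.univ = Xᵀ * X := by
  ext a b
  rw [gram_apply, Matrix.mul_apply]
  simp [Matrix.transpose_apply]

lemma mul_vecMulVec (M : Matrix (Fin d) (Fin d) ℝ) (x y : Fin d → ℝ) :
    M * vecMulVec x y = vecMulVec (M *ᵥ x) y := by
  ext a b
  simp [Matrix.mul_apply, vecMulVec_apply, Matrix.mulVec, dotProduct, Finset.sum_mul, mul_assoc]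

lemma vecMulVec_mul (M : Matrix (Fin d) (Fin d) ℝ) (x y : Fin d → ℝ) :
    vecMulVec x y * M = vecMulVec x (y ᵥ* M) := by
  ext a b
  simp [Matrix.mul_apply, vecMulVec_apply, Matrix.vecMul, dotProduct, Finset.mul_sum, mul_assoc]

lemma vecMulVec_mul_vecMulVec (x y u v : Fin d → ℝ) :
    vecMulVec x y * vecMulVec u v = (y ⬝ᵥ u) • vecMulVec x v := by
  ext a b
  simp only [Matrix.mul_apply, vecMulVec_apply, Matrix.smul_apply, dotProduct, Finset.sum_mul,
    smul_eq_mul]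
  exact Finset.sum_congr rfl fun i _ => by ring

lemma vecMulVec_mulVec (x y v : Fin d → ℝ) :
    vecMulVec x y *ᵥ v = (y ⬝ᵥ v) • x := by
  ext a
  simp only [Matrix.mulVec, vecMulVec_apply, dotProduct, Pi.smul_apply, smul_eq_mul,
    Finset.sum_mul]
  exact Finset.sum_congr rfl fun i _ => by ring

lemma vecMulVec_transpose (x y : Fin d → ℝ) : (vecMulVec x y)ᵀ = vecMulVec y x := by
  ext a b; simp [vecMulVec_apply, mul_comm]

lemma psd_form' {M : Matrix (Fin d) (Fin d) ℝ} (h : M.PosSemidef) (x : Fin d → ℝ) :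
    0 ≤ x ⬝ᵥ M *ᵥ x := by simpa using h.dotProduct_mulVec_nonneg x

lemma vecMulVec_psd (x : Fin d → ℝ) : (vecMulVec x x).PosSemidef := by
  refine Matrix.PosSemidef.of_dotProduct_mulVec_nonneg ?_ (fun v => ?_)
  · rw [Matrix.IsHermitian, conjTranspose_eq_transpose_of_trivial, vecMulVec_transpose]
  · simp only [star_trivial]
    rw [vecMulVec_mulVec, dotProduct_smul, smul_eq_mul, dotProduct_comm]
    exact mul_self_nonneg _

lemma form_vecMulVec (x y v : Fin d → ℝ) : v ⬝ᵥ vecMulVec x y *ᵥ v = (v ⬝ᵥ x) * (y ⬝ᵥ v) := by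
  rw [vecMulVec_mulVec, dotProduct_smul, smul_eq_mul, mul_comm]

lemma sum_vecMulVec (X : Matrix (Fin n) (Fin d) ℝ) (S : Finset (Fin n)) :
    ∑ i ∈ S, vecMulVec (fun a => X i a) (fun a => X i a) = gram X S := by
  ext a b
  rw [Matrix.sum_apply, gram_apply]
  exact Finset.sum_congr rfl fun i _ => rfl

lemma gram_erase (X : Matrix (Fin n) (Fin d) ℝ) {S : Finset (Fin n)} {i : Fin n} (hi : i ∈ S) :
    gram X (S.erase i) = gram X S - vecMulVec (fun a => X i a) (fun a => X i a) := by
  ext a b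
  rw [Matrix.sub_apply, gram_apply, gram_apply, vecMulVec_apply,
    Finset.sum_erase_eq_sub hi]

lemma gram_psd (X : Matrix (Fin n) (Fin d) ℝ) (S : Finset (Fin n)) : (gram X S).PosSemidef := by
  rw [← sum_vecMulVec]
  exact Finset.sum_induction _ _ (fun a b ha hb => ha.add hb) Matrix.PosSemidef.zero
    (fun i _ => vecMulVec_psd _)

lemma smul_one_psd {lam : ℝ} (hlam : 0 ≤ lam) :
    (lam • (1 : Matrix (Fin d) (Fin d) ℝ)).PosSemidef := by
  rw [Matrix.smul_one_eq_diagonal]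
  exact Matrix.PosSemidef.diagonal fun i => hlam


lemma det_sub_vecMulVec {A : Matrix (Fin d) (Fin d) ℝ} (hA : IsUnit A.det) (x : Fin d → ℝ) :
    (A - vecMulVec x x).det = A.det * (1 - x ⬝ᵥ A⁻¹ *ᵥ x) := by
  have h1 : A - vecMulVec x x = A + replicateCol Unit x * replicateRow Unit (-x) := by
    rw [← vecMulVec_eq]
    ext a b
    simp [vecMulVec_apply]
    ring
  rw [h1, Matrix.det_add_replicateCol_mul_replicateRow hA]
  congr 1
  rw [det_unique]
  simp only [Matrix.add_apply, Matrix.one_apply_eq, Matrix.mul_apply, Matrix.replicateRow_apply,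
    Matrix.replicateCol_apply, Fintype.sum_unique, Pi.neg_apply]
  have h2 : x ⬝ᵥ A⁻¹ *ᵥ x = ∑ a, ∑ b, x b * A⁻¹ b a * x a := by
    rw [Finset.sum_comm]
    simp [dotProduct, Matrix.mulVec, Finset.mul_sum, mul_assoc]
  rw [h2, sub_eq_add_neg, ← Finset.sum_neg_distrib]
  congr 1
  refine Finset.sum_congr rfl fun a _ => ?_
  rw [Finset.sum_mul, ← Finset.sum_neg_distrib]
  exact Finset.sum_congr rfl fun b _ => by ring

lemma sherman_morrison {A : Matrix (Fin d) (Fin d) ℝ} (hA : IsUnit A.det)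
    (hAs : A⁻¹ᵀ = A⁻¹) (x : Fin d → ℝ) (hw : 1 - x ⬝ᵥ A⁻¹ *ᵥ x ≠ 0) :
    (A - vecMulVec x x)⁻¹ =
      A⁻¹ + (1 - x ⬝ᵥ A⁻¹ *ᵥ x)⁻¹ • vecMulVec (A⁻¹ *ᵥ x) (A⁻¹ *ᵥ x) := by
  set u := A⁻¹ *ᵥ x with hu
  have ht : x ⬝ᵥ A⁻¹ *ᵥ x = x ⬝ᵥ u := rfl
  set w := 1 - x ⬝ᵥ u with hwdef
  apply Matrix.inv_eq_right_inv
  have hvm : x ᵥ* A⁻¹ = u := by rw [← Matrix.mulVec_transpose, hAs]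
  have hAu : A *ᵥ u = x := by
    rw [hu, Matrix.mulVec_mulVec, Matrix.mul_nonsing_inv _ hA, Matrix.one_mulVec]
  have e1 : A * (w⁻¹ • vecMulVec u u) = w⁻¹ • vecMulVec x u := by
    rw [Matrix.mul_smul, mul_vecMulVec, hAu]
  have e2 : vecMulVec x x * A⁻¹ = vecMulVec x u := by rw [vecMulVec_mul, hvm]
  have e3 : vecMulVec x x * (w⁻¹ • vecMulVec u u) = (w⁻¹ * (x ⬝ᵥ u)) • vecMulVec x u := by
    rw [Matrix.mul_smul, vecMulVec_mul_vecMulVec, smul_smul]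
  rw [Matrix.sub_mul, Matrix.mul_add, Matrix.mul_add, e1, e2, e3,
    Matrix.mul_nonsing_inv _ hA]
  have e4 : w⁻¹ • vecMulVec x u - (vecMulVec x u + (w⁻¹ * (x ⬝ᵥ u)) • vecMulVec x u)
      = (w⁻¹ - (1 + w⁻¹ * (x ⬝ᵥ u))) • vecMulVec x u := by
    rw [sub_smul, add_smul, one_smul]
  have e5 : w⁻¹ - (1 + w⁻¹ * (x ⬝ᵥ u)) = 0 := by
    field_simp
    rw [hwdef]; ring
  calc 1 + w⁻¹ • vecMulVec x u - (vecMulVec x u + (w⁻¹ * (x ⬝ᵥ u)) • vecMulVec x u)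
      = 1 + (w⁻¹ • vecMulVec x u
          - (vecMulVec x u + (w⁻¹ * (x ⬝ᵥ u)) • vecMulVec x u)) := by abel
    _ = 1 := by rw [e4, e5, zero_smul, add_zero]

lemma psd_kernel {M : Matrix (Fin d) (Fin d) ℝ} (h : M.PosSemidef) {x : Fin d → ℝ}
    (hx : x ⬝ᵥ M *ᵥ x = 0) : M *ᵥ x = 0 := by
  rw [← h.dotProduct_mulVec_zero_iff]
  simpa using hx

/-- If `G ⪰ A ⪰ 0` and `A` is nonsingular, then `G` is nonsingular. -/
lemma det_isUnit_of_le {A G : Matrix (Fin d) (Fin d) ℝ} (hA : A.PosSemidef)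
    (hG : G.PosSemidef) (hGA : (G - A).PosSemidef) (hdet : IsUnit A.det) : IsUnit G.det := by
  rw [isUnit_iff_ne_zero] at hdet ⊢
  intro h0
  obtain ⟨v, hv, hGv⟩ := (Matrix.exists_mulVec_eq_zero_iff).mpr h0
  have h1 : v ⬝ᵥ G *ᵥ v = 0 := by rw [hGv, dotProduct_zero]
  have h2 : 0 ≤ v ⬝ᵥ A *ᵥ v := psd_form hA v
  have h3 : 0 ≤ v ⬝ᵥ (G - A) *ᵥ v := psd_form hGA v
  have h4 : v ⬝ᵥ (G - A) *ᵥ v = v ⬝ᵥ G *ᵥ v - v ⬝ᵥ A *ᵥ v := by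
    rw [Matrix.sub_mulVec, dotProduct_sub]
  have h5 : v ⬝ᵥ A *ᵥ v = 0 := by rw [h4, h1] at h3; linarith
  have h6 : A *ᵥ v = 0 := psd_kernel hA h5
  exact absurd (Matrix.exists_mulVec_eq_zero_iff.mp ⟨v, hv, h6⟩) hdet

/-- quadratic-form monotonicity of the inverse: if `0 ⪯ A ⪯ G` with `A` nonsingular then
`vᵀ G⁻¹ v ≤ vᵀ A⁻¹ v`. -/
lemma mulVec_dot {A : Matrix (Fin d) (Fin d) ℝ} (hAs : Aᵀ = A) (u z : Fin d → ℝ) :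
    (A *ᵥ u) ⬝ᵥ z = u ⬝ᵥ (A *ᵥ z) := by
  rw [Matrix.dotProduct_mulVec, ← Matrix.mulVec_transpose, hAs]

open scoped MatrixOrder in
lemma inv_form_le {A G : Matrix (Fin d) (Fin d) ℝ} (hA : A.PosSemidef)
    (hG : G.PosSemidef) (hGA : (G - A).PosSemidef) (hdet : IsUnit A.det) (v : Fin d → ℝ) :
    v ⬝ᵥ G⁻¹ *ᵥ v ≤ v ⬝ᵥ A⁻¹ *ᵥ v := by
  have hGdet : IsUnit G.det := det_isUnit_of_le hA hG hGA hdet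
  set u := G⁻¹ *ᵥ v with hu
  set z := A⁻¹ *ᵥ v with hz
  have hGu : G *ᵥ u = v := by
    rw [hu, Matrix.mulVec_mulVec, Matrix.mul_nonsing_inv _ hGdet, Matrix.one_mulVec]
  have hAz : A *ᵥ z = v := by
    rw [hz, Matrix.mulVec_mulVec, Matrix.mul_nonsing_inv _ hdet, Matrix.one_mulVec]
  set R := CFC.sqrt A with hR
  have hRpsd : R.PosSemidef := (CFC.sqrt_nonneg A).posSemidef
  have hRs : Rᵀ = R := psd_symm hRpsd
  have hRR : R * R = A := CFC.sqrt_mul_sqrt_self A hA.nonneg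
  set a := v ⬝ᵥ G⁻¹ *ᵥ v with ha
  set b := v ⬝ᵥ A⁻¹ *ᵥ v with hb
  have ha' : a = u ⬝ᵥ v := by rw [ha, ← hu, dotProduct_comm]
  have hann : 0 ≤ a := psd_form hG.inv v
  have hbnn : 0 ≤ b := psd_form hA.inv v
  -- a = (R u) ⬝ᵥ (R z)
  have key : a = (R *ᵥ u) ⬝ᵥ (R *ᵥ z) := by
    rw [mulVec_dot hRs, Matrix.mulVec_mulVec, hRR, hAz, ha']
  have cs : a ^ 2 ≤ ((R *ᵥ u) ⬝ᵥ (R *ᵥ u)) * ((R *ᵥ z) ⬝ᵥ (R *ᵥ z)) := by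
    rw [key]
    simpa [dotProduct, sq] using
      Finset.sum_mul_sq_le_sq_mul_sq Finset.univ (R *ᵥ u) (R *ᵥ z)
  have hq1 : (R *ᵥ u) ⬝ᵥ (R *ᵥ u) = u ⬝ᵥ A *ᵥ u := by
    rw [mulVec_dot hRs, Matrix.mulVec_mulVec, hRR]
  have hq2 : (R *ᵥ z) ⬝ᵥ (R *ᵥ z) = b := by
    rw [mulVec_dot hRs, Matrix.mulVec_mulVec, hRR, hAz, hb, hz, dotProduct_comm]
  have hq3 : u ⬝ᵥ A *ᵥ u ≤ a := by
    have := psd_form hGA u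
    rw [Matrix.sub_mulVec, dotProduct_sub, hGu] at this
    rw [ha']
    linarith
  have hq4 : 0 ≤ u ⬝ᵥ A *ᵥ u := psd_form hA u
  have : a ^ 2 ≤ a * b := le_trans cs (by rw [hq2]; exact mul_le_mul_of_nonneg_right (hq1 ▸ hq3) hbnn)
  nlinarith

lemma diag_eq_form (M : Matrix (Fin d) (Fin d) ℝ) (j : Fin d) :
    M j j = (Pi.single j 1 : Fin d → ℝ) ⬝ᵥ M *ᵥ (Pi.single j 1) := by
  rw [Matrix.mulVec_single, single_dotProduct]
  simp

lemma trace_inv_le {A G : Matrix (Fin d) (Fin d) ℝ} (hA : A.PosSemidef)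
    (hG : G.PosSemidef) (hGA : (G - A).PosSemidef) (hdet : IsUnit A.det) :
    G⁻¹.trace ≤ A⁻¹.trace := by
  rw [Matrix.trace, Matrix.trace]
  refine Finset.sum_le_sum fun j _ => ?_
  rw [Matrix.diag_apply, Matrix.diag_apply, diag_eq_form G⁻¹ j, diag_eq_form A⁻¹ j]
  exact inv_form_le hA hG hGA hdet _


variable (X : Matrix (Fin n) (Fin d) ℝ) (lam : ℝ)

lemma trace_mul_vecMulVec (M : Matrix (Fin d) (Fin d) ℝ) (x : Fin d → ℝ) :
    (M * vecMulVec x x).trace = x ⬝ᵥ M *ᵥ x := by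
  rw [mul_vecMulVec, Matrix.trace, dotProduct]
  simp only [Matrix.diag_apply, vecMulVec_apply]
  exact Finset.sum_congr rfl fun a _ => by rw [mul_comm]

lemma sum_forms_eq_trace (M : Matrix (Fin d) (Fin d) ℝ) (S : Finset (Fin n)) :
    ∑ i ∈ S, (fun a => X i a) ⬝ᵥ M *ᵥ (fun a => X i a) = (M * gram X S).trace := by
  rw [← sum_vecMulVec, Finset.mul_sum, Matrix.trace_sum]
  exact Finset.sum_congr rfl fun i _ => (trace_mul_vecMulVec _ _).symm

lemma gram_add_compl (S : Finset (Fin n)) : gram X S + gram X Sᶜ = Xᵀ * X := by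
  ext a b
  rw [Matrix.add_apply, gram_apply, gram_apply, ← gram_univ X, gram_apply]
  exact Finset.sum_add_sum_compl S _

lemma trace_inv_mul_gram {T : Finset (Fin n)}
    (hdet : IsUnit (gram X T + lam • (1 : Matrix (Fin d) (Fin d) ℝ)).det) :
    ((gram X T + lam • (1 : Matrix (Fin d) (Fin d) ℝ))⁻¹ * gram X T).trace
      = (d : ℝ) - lam * (gram X T + lam • (1 : Matrix (Fin d) (Fin d) ℝ))⁻¹.trace := by
  set A := gram X T + lam • (1 : Matrix (Fin d) (Fin d) ℝ) with hA
  have h1 : gram X T = A - lam • 1 := by rw [hA, add_sub_cancel_right]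
  rw [h1, Matrix.mul_sub, Matrix.nonsing_inv_mul _ hdet, Matrix.mul_smul, Matrix.mul_one,
    Matrix.trace_sub, Matrix.trace_one, Matrix.trace_smul]
  simp

lemma dlam_eq (hG : IsUnit (Xᵀ * X + lam • (1 : Matrix (Fin d) (Fin d) ℝ)).det) :
    Matrix.trace (X * (Xᵀ * X + lam • 1)⁻¹ * Xᵀ)
      = (d : ℝ) - lam * (Xᵀ * X + lam • (1 : Matrix (Fin d) (Fin d) ℝ))⁻¹.trace := by
  set G := Xᵀ * X + lam • (1 : Matrix (Fin d) (Fin d) ℝ) with hGd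
  have h0 : X * G⁻¹ * Xᵀ = X * (G⁻¹ * Xᵀ) := by rw [Matrix.mul_assoc]
  rw [h0, Matrix.trace_mul_comm, Matrix.mul_assoc]
  have h1 : Xᵀ * X = G - lam • 1 := by rw [hGd, add_sub_cancel_right]
  rw [h1, Matrix.mul_sub, Matrix.nonsing_inv_mul _ hG, Matrix.mul_smul, Matrix.mul_one,
    Matrix.trace_sub, Matrix.trace_one, Matrix.trace_smul]
  simp

lemma conj_vecMulVec {A : Matrix (Fin d) (Fin d) ℝ} (hAs : Aᵀ = A) (x : Fin d → ℝ) :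
    A * vecMulVec x x * A = vecMulVec (A *ᵥ x) (A *ᵥ x) := by
  rw [mul_vecMulVec, vecMulVec_mul, ← Matrix.mulVec_transpose, hAs]


/-- The key one-step inequality of regularized volume sampling. -/
lemma step (hlam : 0 ≤ lam) (T : Finset (Fin n))
    (hT : Matrix.trace (X * (Xᵀ * X + lam • 1)⁻¹ * Xᵀ) + 1 ≤ (T.card : ℝ)) :
    ((((T.card : ℝ) - Matrix.trace (X * (Xᵀ * X + lam • 1)⁻¹ * Xᵀ) + 1) /
        ((T.card : ℝ) - Matrix.trace (X * (Xᵀ * X + lam • 1)⁻¹ * Xᵀ))) •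
          (gram X T + lam • (1 : Matrix (Fin d) (Fin d) ℝ))⁻¹
      - ∑ i ∈ T, remProb X lam T i •
          (gram X (T.erase i) + lam • (1 : Matrix (Fin d) (Fin d) ℝ))⁻¹).PosSemidef := by
  classical
  set dl : ℝ := Matrix.trace (X * (Xᵀ * X + lam • 1)⁻¹ * Xᵀ) with hdl
  set A : Matrix (Fin d) (Fin d) ℝ := gram X T + lam • 1 with hAdef
  set G : Matrix (Fin d) (Fin d) ℝ := Xᵀ * X + lam • 1 with hGdef
  have hApsd : A.PosSemidef := (gram_psd X T).add (smul_one_psd hlam)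
  have hGpsd : G.PosSemidef := by
    rw [hGdef, ← gram_univ X]
    exact (gram_psd X _).add (smul_one_psd hlam)
  by_cases hdet : IsUnit A.det
  · -- main case
    have hdet0 : A.det ≠ 0 := by rwa [isUnit_iff_ne_zero] at hdet
    have hAs : Aᵀ = A := psd_symm hApsd
    have hAis : A⁻¹ᵀ = A⁻¹ := by rw [Matrix.transpose_nonsing_inv, hAs]
    have hAipsd : A⁻¹.PosSemidef := hApsd.inv
    set x : Fin n → Fin d → ℝ := fun i a => X i a with hx
    set t : Fin n → ℝ := fun i => x i ⬝ᵥ A⁻¹ *ᵥ x i with ht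
    have hAe : ∀ i ∈ T, gram X (T.erase i) + lam • (1 : Matrix (Fin d) (Fin d) ℝ)
        = A - vecMulVec (x i) (x i) := fun i hi => by
      rw [gram_erase X hi, sub_add_eq_add_sub, hAdef]
    have hAEpsd : ∀ i ∈ T, (A - vecMulVec (x i) (x i)).PosSemidef := fun i hi => by
      rw [← hAe i hi]; exact (gram_psd X _).add (smul_one_psd hlam)
    have hwgt : ∀ i ∈ T, remWeight X lam T i = 1 - t i := fun i hi => by
      rw [remWeight, hAe i hi, det_sub_vecMulVec hdet, ← hAdef,
        mul_div_cancel_left₀ _ hdet0]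
    have ht0 : ∀ i, 0 ≤ t i := fun i => psd_form hAipsd _
    have hAu : ∀ i, A *ᵥ (A⁻¹ *ᵥ x i) = x i := fun i => by
      rw [Matrix.mulVec_mulVec, Matrix.mul_nonsing_inv _ hdet, Matrix.one_mulVec]
    have ht1 : ∀ i ∈ T, t i ≤ 1 := fun i hi => by
      have h1 := psd_form (hAEpsd i hi) ((A⁻¹ *ᵥ x i))
      rw [Matrix.sub_mulVec, dotProduct_sub, hAu i, form_vecMulVec] at h1
      have e1 : (A⁻¹ *ᵥ x i) ⬝ᵥ x i = t i := by rw [dotProduct_comm]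
      have e2 : x i ⬝ᵥ (A⁻¹ *ᵥ x i) = t i := rfl
      rw [e1, e2] at h1
      nlinarith [ht0 i]
    set W : ℝ := ∑ j ∈ T, remWeight X lam T j with hW
    have hWt : W = (T.card : ℝ) - ((d : ℝ) - lam * A⁻¹.trace) := by
      rw [hW, Finset.sum_congr rfl hwgt, Finset.sum_sub_distrib, Finset.sum_const,
        nsmul_eq_mul, mul_one]
      congr 1
      rw [ht]
      have := sum_forms_eq_trace X A⁻¹ T
      rw [hx]
      rw [this, trace_inv_mul_gram X lam hdet]
    have hGA : (G - A).PosSemidef := by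
      have h1 : G - A = gram X Tᶜ := by
        rw [hGdef, hAdef, ← gram_add_compl X T]
        abel
      rw [h1]; exact gram_psd X _
    have hGdet : IsUnit G.det := det_isUnit_of_le hApsd hGpsd hGA hdet
    have hdleq : dl = (d : ℝ) - lam * G⁻¹.trace := dlam_eq X lam hGdet
    have htrineq : G⁻¹.trace ≤ A⁻¹.trace := trace_inv_le hApsd hGpsd hGA hdet
    have hWdl : (T.card : ℝ) - dl ≤ W := by
      rw [hWt, hdleq]
      nlinarith [mul_nonneg hlam (sub_nonneg.mpr htrineq)]
    have hm1 : 1 ≤ (T.card : ℝ) - dl := by linarith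
    have hWpos : 0 < W := by linarith
    set Q : Matrix (Fin d) (Fin d) ℝ := A⁻¹ * A⁻¹ with hQ
    have hQpsd : Q.PosSemidef := by
      have h1 := Matrix.posSemidef_conjTranspose_mul_self A⁻¹
      rwa [conjTranspose_eq_transpose_of_trivial, hAis, ← hQ] at h1
    -- per-index inequality
    have hPer : ∀ i ∈ T,
        (remWeight X lam T i • A⁻¹ + vecMulVec ((A⁻¹ *ᵥ x i)) ((A⁻¹ *ᵥ x i))
          - remWeight X lam T i • (A - vecMulVec (x i) (x i))⁻¹).PosSemidef := by
      intro i hi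
      by_cases hwi : 1 - t i = 0
      · have hz : remWeight X lam T i = 0 := by rw [hwgt i hi, hwi]
        rw [hz, zero_smul, zero_smul, zero_add, sub_zero]
        exact vecMulVec_psd _
      · rw [hwgt i hi, sherman_morrison hdet hAis (x i) hwi, smul_add, smul_smul,
          mul_inv_cancel₀ hwi, one_smul]
        skip
        have : (1 - t i) • A⁻¹ + vecMulVec ((A⁻¹ *ᵥ x i)) ((A⁻¹ *ᵥ x i))
            - ((1 - t i) • A⁻¹ + vecMulVec ((A⁻¹ *ᵥ x i)) ((A⁻¹ *ᵥ x i))) = 0 := sub_self _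
        rw [this]
        exact Matrix.PosSemidef.zero
    have hSig : (∑ i ∈ T, (remWeight X lam T i • A⁻¹ + vecMulVec ((A⁻¹ *ᵥ x i)) ((A⁻¹ *ᵥ x i))
        - remWeight X lam T i • (A - vecMulVec (x i) (x i))⁻¹)).PosSemidef :=
      psd_sum hPer
    -- identify the sum
    have hC : ∑ i ∈ T, vecMulVec ((A⁻¹ *ᵥ x i)) ((A⁻¹ *ᵥ x i)) = A⁻¹ - lam • Q := by
      have h1 : ∀ i ∈ T, vecMulVec ((A⁻¹ *ᵥ x i)) ((A⁻¹ *ᵥ x i)) = A⁻¹ * vecMulVec (x i) (x i) * A⁻¹ :=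
        fun i hi => by rw [conj_vecMulVec hAis]
      rw [Finset.sum_congr rfl h1, ← Finset.sum_mul, ← Finset.mul_sum, hx, sum_vecMulVec]
      have h2 : gram X T = A - lam • 1 := by rw [hAdef, add_sub_cancel_right]
      rw [h2, Matrix.mul_sub, Matrix.mul_smul, Matrix.mul_one, Matrix.sub_mul,
        Matrix.nonsing_inv_mul _ hdet, Matrix.one_mul, Matrix.smul_mul, hQ]
    have hSigEq : (∑ i ∈ T, (remWeight X lam T i • A⁻¹ + vecMulVec ((A⁻¹ *ᵥ x i)) ((A⁻¹ *ᵥ x i))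
        - remWeight X lam T i • (A - vecMulVec (x i) (x i))⁻¹))
        = W • A⁻¹ + (A⁻¹ - lam • Q)
          - ∑ i ∈ T, remWeight X lam T i • (A - vecMulVec (x i) (x i))⁻¹ := by
      rw [Finset.sum_sub_distrib, Finset.sum_add_distrib, ← Finset.sum_smul, ← hW, hC]
    rw [hSigEq] at hSig
    -- rewrite the goal sum using remProb = remWeight / W
    have hgoal : ∑ i ∈ T, remProb X lam T i •
          (gram X (T.erase i) + lam • (1 : Matrix (Fin d) (Fin d) ℝ))⁻¹
        = W⁻¹ • ∑ i ∈ T, remWeight X lam T i • (A - vecMulVec (x i) (x i))⁻¹ := by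
      rw [Finset.smul_sum]
      refine Finset.sum_congr rfl fun i hi => ?_
      rw [hAe i hi, remProb, ← hW, div_eq_inv_mul, mul_smul]
    rw [hgoal]
    set Sw : Matrix (Fin d) (Fin d) ℝ :=
      ∑ i ∈ T, remWeight X lam T i • (A - vecMulVec (x i) (x i))⁻¹ with hSw
    have hkey : (((T.card : ℝ) - dl + 1) / ((T.card : ℝ) - dl)) • A⁻¹ - W⁻¹ • Sw
        = W⁻¹ • (W • A⁻¹ + (A⁻¹ - lam • Q) - Sw) + (lam * W⁻¹) • Q
          + ((((T.card : ℝ) - dl + 1) / ((T.card : ℝ) - dl)) - (W + 1) / W) • A⁻¹ := by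
      match_scalars <;> field_simp <;> ring
    rw [hkey]
    have hcoef : 0 ≤ (((T.card : ℝ) - dl + 1) / ((T.card : ℝ) - dl)) - (W + 1) / W := by
      have hmpos : (0:ℝ) < (T.card : ℝ) - dl := by linarith
      have he : (((T.card : ℝ) - dl + 1) / ((T.card : ℝ) - dl)) - (W + 1) / W
          = (W - ((T.card : ℝ) - dl)) / (((T.card : ℝ) - dl) * W) := by
        field_simp
        ring
      rw [he]
      apply div_nonneg (by linarith) (by positivity)
    exact ((psd_smul hSig (by positivity)).add
      (psd_smul hQpsd (by positivity))).add (psd_smul hAipsd hcoef)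
  · -- degenerate case : `A` singular
    have hA0 : A⁻¹ = 0 := Matrix.nonsing_inv_apply_not_isUnit _ hdet
    have hd0 : A.det = 0 := by rwa [isUnit_iff_ne_zero, not_not] at hdet
    have hp : ∀ i ∈ T, remProb X lam T i •
        (gram X (T.erase i) + lam • (1 : Matrix (Fin d) (Fin d) ℝ))⁻¹ = 0 := by
      intro i _
      have : remWeight X lam T i = 0 := by rw [remWeight, ← hAdef, hd0, div_zero]
      rw [remProb, this, zero_div, zero_smul]
    rw [Finset.sum_congr rfl hp, Finset.sum_const, smul_zero, sub_zero, hA0, smul_zero]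
    exact Matrix.PosSemidef.zero


lemma reachProb_univ : reachProb X lam (Finset.univ : Finset (Fin n)) = 1 := by
  rw [reachProb]; simp

lemma reachProb_eq {S : Finset (Fin n)} (h : S ≠ Finset.univ) :
    reachProb X lam S
      = ∑ i ∈ Sᶜ, reachProb X lam (insert i S) * remProb X lam (insert i S) i := by
  rw [reachProb, dif_neg h]
  exact Finset.sum_attach Sᶜ (fun i => reachProb X lam (insert i S) * remProb X lam (insert i S) i)

lemma remWeight_nonneg (hlam : 0 ≤ lam) (S : Finset (Fin n)) (i : Fin n) :
    0 ≤ remWeight X lam S i :=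
  div_nonneg (psd_det_nonneg ((gram_psd X _).add (smul_one_psd hlam)))
    (psd_det_nonneg ((gram_psd X _).add (smul_one_psd hlam)))

lemma remProb_nonneg (hlam : 0 ≤ lam) (S : Finset (Fin n)) (i : Fin n) :
    0 ≤ remProb X lam S i :=
  div_nonneg (remWeight_nonneg X lam hlam S i)
    (Finset.sum_nonneg fun j _ => remWeight_nonneg X lam hlam S j)

lemma reachProb_nonneg_aux (hlam : 0 ≤ lam) :
    ∀ m : ℕ, ∀ S : Finset (Fin n), n - S.card ≤ m → 0 ≤ reachProb X lam S := by
  intro m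
  induction m with
  | zero =>
    intro S hS
    have hcard : S.card ≤ n := by simpa using Finset.card_le_card (Finset.subset_univ S)
    have : S = Finset.univ := by
      apply Finset.eq_univ_of_card
      · simp only [Finset.card_univ, Fintype.card_fin]; omega
    rw [this, reachProb_univ]; norm_num
  | succ m ih =>
    intro S hS
    by_cases h : S = Finset.univ
    · rw [h, reachProb_univ]; norm_num
    · rw [reachProb_eq X lam h]
      refine Finset.sum_nonneg fun i hi => ?_
      have hiS : i ∉ S := by simpa using hi
      have hcard : (insert i S).card = S.card + 1 := Finset.card_insert_of_notMem hiS
      refine mul_nonneg (ih _ (by omega)) (remProb_nonneg X lam hlam _ _)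

lemma reachProb_nonneg (hlam : 0 ≤ lam) (S : Finset (Fin n)) : 0 ≤ reachProb X lam S :=
  reachProb_nonneg_aux X lam hlam n S (by omega)

lemma sum_insert_comm {M : Type*} [AddCommMonoid M] (k : ℕ)
    (f : Finset (Fin n) → Fin n → M) :
    ∑ S ∈ Finset.powersetCard k (Finset.univ : Finset (Fin n)), ∑ i ∈ Sᶜ, f (insert i S) i
      = ∑ T ∈ Finset.powersetCard (k + 1) (Finset.univ : Finset (Fin n)), ∑ i ∈ T, f T i := by
  classical
  rw [Finset.sum_sigma', Finset.sum_sigma']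
  refine Finset.sum_nbij' (fun p => ⟨insert p.2 p.1, p.2⟩) (fun p => ⟨p.1.erase p.2, p.2⟩)
    ?_ ?_ ?_ ?_ ?_
  · rintro ⟨S, i⟩ hp
    simp only [Finset.mem_sigma, Finset.mem_powersetCard_univ, Finset.mem_compl] at hp
    simp only [Finset.mem_sigma, Finset.mem_powersetCard_univ, Finset.mem_insert]
    exact ⟨by rw [Finset.card_insert_of_notMem hp.2, hp.1], Or.inl trivial⟩
  · rintro ⟨T, i⟩ hp
    simp only [Finset.mem_sigma, Finset.mem_powersetCard_univ] at hp
    simp only [Finset.mem_sigma, Finset.mem_powersetCard_univ, Finset.mem_compl,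
      Finset.mem_erase]
    refine ⟨?_, fun hc => hc.1 rfl⟩
    rw [Finset.card_erase_of_mem hp.2, hp.1]
    omega
  · rintro ⟨S, i⟩ hp
    simp only [Finset.mem_sigma, Finset.mem_powersetCard_univ, Finset.mem_compl] at hp
    simp [Finset.erase_insert hp.2]
  · rintro ⟨T, i⟩ hp
    simp only [Finset.mem_sigma, Finset.mem_powersetCard_univ] at hp
    simp [Finset.insert_erase hp.2]
  · rintro ⟨S, i⟩ hp
    rfl


lemma main_aux (hlam : 0 ≤ lam) (s : ℕ) (hsn : s ≤ n)
    (hs : Matrix.trace (X * (Xᵀ * X + lam • 1)⁻¹ * Xᵀ) ≤ (s : ℝ)) :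
    ∀ m k : ℕ, n - k ≤ m → s ≤ k → k ≤ n →
      (((((n : ℝ) - Matrix.trace (X * (Xᵀ * X + lam • 1)⁻¹ * Xᵀ) + 1) /
            ((k : ℝ) - Matrix.trace (X * (Xᵀ * X + lam • 1)⁻¹ * Xᵀ) + 1)) •
              (Xᵀ * X + lam • 1)⁻¹
          - ∑ S ∈ Finset.powersetCard k (Finset.univ : Finset (Fin n)),
              reachProb X lam S •
                (gram X S + lam • (1 : Matrix (Fin d) (Fin d) ℝ))⁻¹) :
          Matrix (Fin d) (Fin d) ℝ).PosSemidef := by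
  classical
  set dl : ℝ := Matrix.trace (X * (Xᵀ * X + lam • 1)⁻¹ * Xᵀ) with hdl
  have hbase :
      (((((n : ℝ) - dl + 1) / ((n : ℝ) - dl + 1)) • (Xᵀ * X + lam • 1)⁻¹
          - ∑ S ∈ Finset.powersetCard n (Finset.univ : Finset (Fin n)),
              reachProb X lam S •
                (gram X S + lam • (1 : Matrix (Fin d) (Fin d) ℝ))⁻¹) :
          Matrix (Fin d) (Fin d) ℝ).PosSemidef := by
    have hps : Finset.powersetCard n (Finset.univ : Finset (Fin n)) = {Finset.univ} := by
      ext S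
      rw [Finset.mem_powersetCard_univ, Finset.mem_singleton]
      constructor
      · intro h
        exact Finset.eq_univ_of_card S (by simpa using h)
      · rintro rfl
        simp
    rw [hps, Finset.sum_singleton, reachProb_univ, one_smul, gram_univ]
    have hne : ((n : ℝ) - dl + 1) ≠ 0 := by
      have h1 : (s:ℝ) ≤ (n:ℝ) := by exact_mod_cast hsn
      have h2 : dl ≤ (s:ℝ) := hs
      nlinarith
    rw [div_self hne, one_smul, sub_self]
    exact Matrix.PosSemidef.zero
  intro m
  induction m with
  | zero =>
    intro k hm hk1 hk2
    have hkn : k = n := by omega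
    subst hkn
    exact hbase
  | succ m ih =>
    intro k hm hk1 hk2
    by_cases hkn : k = n
    · subst hkn; exact hbase
    · have hkn' : k < n := lt_of_le_of_ne hk2 hkn
      have prev := ih (k + 1) (by omega) (by omega) (by omega)
      push_cast at prev
      have hdls : dl ≤ (s:ℝ) := hs
      have hsk : (s:ℝ) ≤ (k:ℝ) := by exact_mod_cast hk1
      have hd1 : (0:ℝ) < (k:ℝ) - dl + 1 := by linarith
      have hd2 : (0:ℝ) < (k:ℝ) + 1 - dl + 1 := by linarith
      have hd3 : (0:ℝ) < (k:ℝ) + 1 - dl := by linarith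
      set rho : ℝ := ((k : ℝ) + 1 - dl + 1) / ((k : ℝ) + 1 - dl) with hrho
      have hrhopos : 0 < rho := by
        apply div_pos <;> linarith
      -- rewrite E_k as a sum over (k+1)-subsets
      have hEk : ∑ S ∈ Finset.powersetCard k (Finset.univ : Finset (Fin n)),
            reachProb X lam S • (gram X S + lam • (1 : Matrix (Fin d) (Fin d) ℝ))⁻¹
          = ∑ T ∈ Finset.powersetCard (k + 1) (Finset.univ : Finset (Fin n)),
              reachProb X lam T • ∑ i ∈ T, remProb X lam T i •
                (gram X (T.erase i) + lam • (1 : Matrix (Fin d) (Fin d) ℝ))⁻¹ := by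
        have h1 : ∀ S ∈ Finset.powersetCard k (Finset.univ : Finset (Fin n)),
            reachProb X lam S • (gram X S + lam • (1 : Matrix (Fin d) (Fin d) ℝ))⁻¹
            = ∑ i ∈ Sᶜ, (reachProb X lam (insert i S) * remProb X lam (insert i S) i) •
                (gram X ((insert i S).erase i) + lam • (1 : Matrix (Fin d) (Fin d) ℝ))⁻¹ := by
          intro S hS
          have hScard : S.card = k := Finset.mem_powersetCard_univ.mp hS
          have hSne : S ≠ Finset.univ := by
            intro h
            rw [h] at hScard
            simp only [Finset.card_univ, Fintype.card_fin] at hScard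
            omega
          rw [reachProb_eq X lam hSne, Finset.sum_smul]
          refine Finset.sum_congr rfl fun i hi => ?_
          rw [Finset.erase_insert (by simpa using hi)]
        rw [Finset.sum_congr rfl h1,
          sum_insert_comm k (fun T i => (reachProb X lam T * remProb X lam T i) •
            (gram X (T.erase i) + lam • (1 : Matrix (Fin d) (Fin d) ℝ))⁻¹)]
        refine Finset.sum_congr rfl fun T _ => ?_
        rw [Finset.smul_sum]
        exact Finset.sum_congr rfl fun i _ => by rw [mul_smul]
      have hcoef : ((n : ℝ) - dl + 1) / ((k : ℝ) - dl + 1)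
          = rho * (((n : ℝ) - dl + 1) / ((k : ℝ) + 1 - dl + 1)) := by
        rw [hrho, div_mul_div_comm]
        rw [div_eq_div_iff hd1.ne' (by positivity)]
        ring
      have hsplit : (((n : ℝ) - dl + 1) / ((k : ℝ) - dl + 1)) • (Xᵀ * X + lam • 1)⁻¹
            - ∑ S ∈ Finset.powersetCard k (Finset.univ : Finset (Fin n)),
              reachProb X lam S • (gram X S + lam • (1 : Matrix (Fin d) (Fin d) ℝ))⁻¹
          = rho • ((((n : ℝ) - dl + 1) / ((k : ℝ) + 1 - dl + 1)) • (Xᵀ * X + lam • 1)⁻¹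
              - ∑ S ∈ Finset.powersetCard (k + 1) (Finset.univ : Finset (Fin n)),
                  reachProb X lam S • (gram X S + lam • (1 : Matrix (Fin d) (Fin d) ℝ))⁻¹)
            + ∑ T ∈ Finset.powersetCard (k + 1) (Finset.univ : Finset (Fin n)),
                reachProb X lam T •
                  (rho • (gram X T + lam • (1 : Matrix (Fin d) (Fin d) ℝ))⁻¹
                    - ∑ i ∈ T, remProb X lam T i •
                      (gram X (T.erase i) + lam • (1 : Matrix (Fin d) (Fin d) ℝ))⁻¹) := by
        rw [hEk, smul_sub, smul_smul, ← hcoef]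
        have h2 : ∀ T ∈ Finset.powersetCard (k + 1) (Finset.univ : Finset (Fin n)),
            reachProb X lam T •
              (rho • (gram X T + lam • (1 : Matrix (Fin d) (Fin d) ℝ))⁻¹
                - ∑ i ∈ T, remProb X lam T i •
                  (gram X (T.erase i) + lam • (1 : Matrix (Fin d) (Fin d) ℝ))⁻¹)
            = rho • (reachProb X lam T •
                  (gram X T + lam • (1 : Matrix (Fin d) (Fin d) ℝ))⁻¹)
              - reachProb X lam T • ∑ i ∈ T, remProb X lam T i •
                  (gram X (T.erase i) + lam • (1 : Matrix (Fin d) (Fin d) ℝ))⁻¹ := by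
          intro T _
          rw [smul_sub, smul_comm]
        rw [Finset.sum_congr rfl h2, Finset.sum_sub_distrib, ← Finset.smul_sum]
        abel
      rw [hsplit]
      refine (psd_smul prev (le_of_lt hrhopos)).add (psd_sum fun T hT => ?_)
      have hTcard : T.card = k + 1 := Finset.mem_powersetCard_univ.mp hT
      have hstep := step X lam hlam T (by rw [hTcard]; push_cast; linarith)
      have hc : ((T.card : ℕ) : ℝ) = (k : ℝ) + 1 := by rw [hTcard]; push_cast; ring
      rw [hc] at hstep
      exact psd_smul (by rw [hrho]; exact hstep) (reachProb_nonneg X lam hlam T)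

end VS

/-- Regularized second moment bound: for λ-regularized size-`s` volume sampling with
`s ≥ d_λ`, `E[(X_S^⊤X_S + λI)^{−1}] ⪯ ((n − d_λ + 1)/(s − d_λ + 1)) (X^⊤X + λI)^{−1}`,
where `d_λ = tr(X(X^⊤X + λI)^{−1}X^⊤)`. -/
theorem regularized_volume_sampling_second_moment {n d : ℕ}
    (X : Matrix (Fin n) (Fin d) ℝ) (lam : ℝ) (hlam : 0 ≤ lam) (s : ℕ) (hsn : s ≤ n)
    (hs : Matrix.trace (X * (Xᵀ * X + lam • 1)⁻¹ * Xᵀ) ≤ (s : ℝ)) :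
    (((((n : ℝ) - Matrix.trace (X * (Xᵀ * X + lam • 1)⁻¹ * Xᵀ) + 1) /
          ((s : ℝ) - Matrix.trace (X * (Xᵀ * X + lam • 1)⁻¹ * Xᵀ) + 1)) •
            (Xᵀ * X + lam • 1)⁻¹
        - ∑ S ∈ Finset.powersetCard s (Finset.univ : Finset (Fin n)),
            reachProb X lam S •
              (gram X S + lam • (1 : Matrix (Fin d) (Fin d) ℝ))⁻¹) :
        Matrix (Fin d) (Fin d) ℝ).PosSemidef :=
  VS.main_aux X lam hlam s hsn hs n s (by omega) le_rfl hsn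
end
end

section
/- Let X ∈ ℝ^{n×d}, λ ≥ 0, w̃ ∈ ℝ^d, and y = Xw̃ + ξ where ξ is a mean-zero random vector with Var[ξ] ⪯ σ²I. For fixed S, let w_λ*(S) = (X_S^⊤X_S + λI)^{−1}X_S^⊤ y_S. If λ ≤ σ²/‖w̃‖², then E_ξ[‖w_λ*(S) − w̃‖²] ≤ σ² · tr((X_S^⊤X_S + λI)^{−1}). -/
open Matrix Finset

noncomputable section

open MeasureTheory

/-- MSE bound for the subsampled ridge estimator under bounded white noise:
if `y = Xw̃ + ξ` with `E[ξ] = 0`, `Var[ξ] ⪯ σ²I`, and `λ‖w̃‖² ≤ σ²`, then for any fixed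
subset `S`, `E_ξ[‖w_λ*(S) − w̃‖²] ≤ σ² tr((X_S^⊤X_S + λI)^{−1})`. -/
theorem ridge_mse_bound {n d : ℕ} (X : Matrix (Fin n) (Fin d) ℝ) (lam σ : ℝ)
    (hlam : 0 ≤ lam) (wt : Fin d → ℝ) (S : Finset (Fin n))
    (hinv : IsUnit (gram X S + lam • (1 : Matrix (Fin d) (Fin d) ℝ)).det)
    {Ω : Type*} [MeasurableSpace Ω] (μ : Measure Ω) [IsProbabilityMeasure μ]
    (ξ : Ω → Fin n → ℝ)
    (hint1 : ∀ i, Integrable (fun ω => ξ ω i) μ)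
    (hint2 : ∀ i j, Integrable (fun ω => ξ ω i * ξ ω j) μ)
    (hmean : ∀ i, ∫ ω, ξ ω i ∂μ = 0)
    (hvar : (σ ^ 2 • (1 : Matrix (Fin n) (Fin n) ℝ)
      - Matrix.of fun i j => ∫ ω, ξ ω i * ξ ω j ∂μ).PosSemidef)
    (hlw : lam * (∑ i, wt i ^ 2) ≤ σ ^ 2) :
    (∫ ω, ∑ i, ((gram X S + lam • (1 : Matrix (Fin d) (Fin d) ℝ))⁻¹.mulVec
        ((rowSub X S)ᵀ.mulVec (fun k : {x // x ∈ S} => X.mulVec wt k.1 + ξ ω k.1)) i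
          - wt i) ^ 2 ∂μ)
      ≤ σ ^ 2 * Matrix.trace (gram X S + lam • (1 : Matrix (Fin d) (Fin d) ℝ))⁻¹ := by
  classical
  set A := gram X S + lam • (1 : Matrix (Fin d) (Fin d) ℝ) with hA
  set B := A⁻¹ with hB
  have hBA : B * A = 1 := Matrix.nonsing_inv_mul A hinv
  have hAT : Aᵀ = A := by
    simp [hA, _root_.gram, Matrix.transpose_add, Matrix.transpose_smul, Matrix.transpose_mul]
  have hBT : Bᵀ = B := by rw [hB, Matrix.transpose_nonsing_inv, hAT]
  set M := B * (rowSub X S)ᵀ with hM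
  have hBg : B * gram X S = 1 - lam • B := by
    have hg : gram X S = A - lam • (1 : Matrix (Fin d) (Fin d) ℝ) := by
      rw [hA]; abel
    rw [hg, Matrix.mul_sub, hBA, Matrix.mul_smul, Matrix.mul_one]
  -- pointwise identity
  have hpt : ∀ ω i, B.mulVec
      ((rowSub X S)ᵀ.mulVec (fun k : {x // x ∈ S} => X.mulVec wt k.1 + ξ ω k.1)) i - wt i
      = M.mulVec (fun k : {x // x ∈ S} => ξ ω k.1) i - lam * B.mulVec wt i := by
    intro ω i
    have hv : (fun k : {x // x ∈ S} => X.mulVec wt k.1 + ξ ω k.1)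
        = (rowSub X S).mulVec wt + fun k : {x // x ∈ S} => ξ ω k.1 := by
      funext k
      simp [rowSub, Matrix.mulVec, dotProduct, Matrix.submatrix_apply]
    rw [hv, Matrix.mulVec_add, Matrix.mulVec_add, Matrix.mulVec_mulVec,
      Matrix.mulVec_mulVec, Matrix.mulVec_mulVec]
    have key : B * (rowSub X S)ᵀ * rowSub X S = 1 - lam • B := by
      rw [Matrix.mul_assoc]
      have hgr : (rowSub X S)ᵀ * rowSub X S = gram X S := rfl
      rw [hgr, hBg]
    rw [key]
    simp only [Matrix.sub_mulVec, Matrix.one_mulVec, Matrix.smul_mulVec, Pi.add_apply,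
      Pi.sub_apply, Pi.smul_apply, smul_eq_mul]
    ring
  -- abbreviations
  set c : Fin d → ℝ := fun i => lam * B.mulVec wt i with hc
  set Cov : {x // x ∈ S} → {x // x ∈ S} → ℝ := fun k l => ∫ ω, ξ ω k.1 * ξ ω l.1 ∂μ with hCov
  have hu_eq : ∀ ω i, M.mulVec (fun k : {x // x ∈ S} => ξ ω k.1) i
      = ∑ k : {x // x ∈ S}, M i k * ξ ω k.1 := by
    intro ω i; simp [Matrix.mulVec, dotProduct]
  have hIntu : ∀ i, Integrable (fun ω => M.mulVec (fun k : {x // x ∈ S} => ξ ω k.1) i) μ := by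
    intro i
    simp only [hu_eq]
    exact integrable_finset_sum _ (fun k _ => (hint1 k.1).const_mul (M i k))
  have hsq_eq : ∀ ω i, (M.mulVec (fun k : {x // x ∈ S} => ξ ω k.1) i) ^ 2
      = ∑ k : {x // x ∈ S}, ∑ l : {x // x ∈ S}, M i k * M i l * (ξ ω k.1 * ξ ω l.1) := by
    intro ω i
    rw [hu_eq, sq, Finset.sum_mul_sum]
    exact Finset.sum_congr rfl fun k _ => Finset.sum_congr rfl fun l _ => by ring
  have hIntu2 : ∀ i, Integrable (fun ω => (M.mulVec (fun k : {x // x ∈ S} => ξ ω k.1) i) ^ 2) μ := by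
    intro i
    simp only [hsq_eq]
    exact integrable_finset_sum _ (fun k _ => integrable_finset_sum _
      (fun l _ => (hint2 k.1 l.1).const_mul (M i k * M i l)))
  have hintu_zero : ∀ i, ∫ ω, M.mulVec (fun k : {x // x ∈ S} => ξ ω k.1) i ∂μ = 0 := by
    intro i
    simp only [hu_eq]
    rw [integral_finset_sum _ (fun k _ => (hint1 k.1).const_mul (M i k))]
    simp only [integral_const_mul, hmean, mul_zero, Finset.sum_const_zero]
  have hintu2 : ∀ i, ∫ ω, (M.mulVec (fun k : {x // x ∈ S} => ξ ω k.1) i) ^ 2 ∂μ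
      = ∑ k : {x // x ∈ S}, ∑ l : {x // x ∈ S}, M i k * M i l * Cov k l := by
    intro i
    simp only [hsq_eq]
    rw [integral_finset_sum _ (fun k _ => integrable_finset_sum _
      (fun l _ => (hint2 k.1 l.1).const_mul (M i k * M i l)))]
    refine Finset.sum_congr rfl fun k _ => ?_
    rw [integral_finset_sum _ (fun l _ => (hint2 k.1 l.1).const_mul (M i k * M i l))]
    exact Finset.sum_congr rfl fun l _ => integral_const_mul _ _
  -- each term
  have hterm : ∀ i, ∫ ω, (M.mulVec (fun k : {x // x ∈ S} => ξ ω k.1) i - c i) ^ 2 ∂μ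
      = (∑ k : {x // x ∈ S}, ∑ l : {x // x ∈ S}, M i k * M i l * Cov k l) + c i ^ 2 := by
    intro i
    have hexp : ∀ ω, (M.mulVec (fun k : {x // x ∈ S} => ξ ω k.1) i - c i) ^ 2
        = (M.mulVec (fun k : {x // x ∈ S} => ξ ω k.1) i) ^ 2
          + ((-2 * c i) * M.mulVec (fun k : {x // x ∈ S} => ξ ω k.1) i + c i ^ 2) := by
      intro ω; ring
    have h2a : Integrable (fun ω => (-2 * c i) * M.mulVec (fun k : {x // x ∈ S} => ξ ω k.1) i) μ :=
      (hIntu i).const_mul _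
    have h2b : Integrable (fun _ : Ω => c i ^ 2) μ := integrable_const _
    have h2 : Integrable (fun ω => -2 * c i * M.mulVec (fun k : {x // x ∈ S} => ξ ω k.1) i
        + c i ^ 2) μ := h2a.add h2b
    simp only [hexp]
    rw [integral_add (hIntu2 i) h2, integral_add h2a h2b,
      integral_const_mul, hintu_zero, hintu2, integral_const]
    simp
  -- rewrite the LHS integral
  have hLHS : (∫ ω, ∑ i, (A⁻¹.mulVec
        ((rowSub X S)ᵀ.mulVec (fun k : {x // x ∈ S} => X.mulVec wt k.1 + ξ ω k.1)) i
          - wt i) ^ 2 ∂μ)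
      = ∑ i, ((∑ k : {x // x ∈ S}, ∑ l : {x // x ∈ S}, M i k * M i l * Cov k l) + c i ^ 2) := by
    have h1 : ∀ ω, (∑ i, (A⁻¹.mulVec
        ((rowSub X S)ᵀ.mulVec (fun k : {x // x ∈ S} => X.mulVec wt k.1 + ξ ω k.1)) i
          - wt i) ^ 2)
        = ∑ i, (M.mulVec (fun k : {x // x ∈ S} => ξ ω k.1) i - c i) ^ 2 := by
      intro ω
      refine Finset.sum_congr rfl fun i _ => ?_
      rw [← hB, hpt ω i]
    simp only [h1]
    rw [integral_finset_sum]
    · exact Finset.sum_congr rfl fun i _ => hterm i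
    · intro i _
      have hexp : ∀ ω, (M.mulVec (fun k : {x // x ∈ S} => ξ ω k.1) i - c i) ^ 2
          = (M.mulVec (fun k : {x // x ∈ S} => ξ ω k.1) i) ^ 2
            + ((-2 * c i) * M.mulVec (fun k : {x // x ∈ S} => ξ ω k.1) i + c i ^ 2) := by
        intro ω; ring
      simp only [hexp]
      exact (hIntu2 i).add (((hIntu i).const_mul _).add (integrable_const _))
  -- Claim 1 : covariance bound
  have hclaim1 : (∑ i, ∑ k : {x // x ∈ S}, ∑ l : {x // x ∈ S}, M i k * M i l * Cov k l)
      ≤ σ ^ 2 * ∑ i, ∑ k : {x // x ∈ S}, (M i k) ^ 2 := by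
    have hD := hvar.submatrix (fun k : {x // x ∈ S} => (k : Fin n))
    rw [← sub_nonneg, Finset.mul_sum, ← Finset.sum_sub_distrib]
    refine Finset.sum_nonneg fun i _ => ?_
    have h0 := hD.dotProduct_mulVec_nonneg (fun k => M i k)
    have hexpand : dotProduct (star (fun k : {x // x ∈ S} => M i k))
        (((σ ^ 2 • (1 : Matrix (Fin n) (Fin n) ℝ)
          - Matrix.of fun i j => ∫ ω, ξ ω i * ξ ω j ∂μ).submatrix
          (fun k : {x // x ∈ S} => (k : Fin n)) (fun k : {x // x ∈ S} => (k : Fin n)))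
          *ᵥ (fun k => M i k))
        = σ ^ 2 * (∑ k : {x // x ∈ S}, (M i k) ^ 2)
          - ∑ k : {x // x ∈ S}, ∑ l : {x // x ∈ S}, M i k * M i l * Cov k l := by
      simp only [dotProduct, Matrix.mulVec, Matrix.submatrix_apply, Matrix.sub_apply,
        Matrix.smul_apply, Matrix.one_apply, Matrix.of_apply, star_trivial, smul_eq_mul,
        mul_ite, mul_one, mul_zero]
      rw [Finset.mul_sum, ← Finset.sum_sub_distrib]
      refine Finset.sum_congr rfl fun k _ => ?_
      rw [Finset.mul_sum]
      have hsplit : ∀ l : {x // x ∈ S},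
          M i k * (((if (k : Fin n) = (l : Fin n) then σ ^ 2 else 0)
            - ∫ ω, ξ ω k.1 * ξ ω l.1 ∂μ) * M i l)
          = (if k = l then σ ^ 2 * M i k ^ 2 else 0) - M i k * M i l * Cov k l := by
        intro l
        by_cases h : k = l
        · subst h; simp [hCov]; ring
        · have hne : ¬((k : Fin n) = (l : Fin n)) := by
            exact fun he => h (Subtype.ext he)
          simp only [hne, if_false, h, hCov, zero_sub]
          ring
      simp only [hsplit]
      rw [Finset.sum_sub_distrib, Finset.sum_ite_eq Finset.univ k
        (fun _ => σ ^ 2 * M i k ^ 2), if_pos (Finset.mem_univ k)]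
    rw [hexpand] at h0
    linarith
  -- Claim 2 : sum of squares of M equals trace B - lam * t2
  set t2 : ℝ := ∑ i, ∑ j, (B i j) ^ 2 with ht2
  have hMMt : M * Mᵀ = B - lam • (B * B) := by
    rw [hM, Matrix.transpose_mul, Matrix.transpose_transpose, hBT]
    calc B * (rowSub X S)ᵀ * (rowSub X S * B)
        = B * gram X S * B := by simp only [_root_.gram, Matrix.mul_assoc]
      _ = (1 - lam • B) * B := by rw [hBg]
      _ = B - lam • (B * B) := by rw [Matrix.sub_mul, Matrix.one_mul, Matrix.smul_mul]
  have hclaim2 : (∑ i, ∑ k : {x // x ∈ S}, (M i k) ^ 2) = Matrix.trace B - lam * t2 := by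
    have h1 : (∑ i, ∑ k : {x // x ∈ S}, (M i k) ^ 2) = Matrix.trace (M * Mᵀ) := by
      simp [Matrix.trace, Matrix.diag, Matrix.mul_apply, sq]
    rw [h1, hMMt, Matrix.trace_sub, Matrix.trace_smul]
    congr 1
    simp only [smul_eq_mul, ht2]
    congr 1
    simp only [Matrix.trace, Matrix.diag, Matrix.mul_apply]
    refine Finset.sum_congr rfl fun i _ => Finset.sum_congr rfl fun j _ => ?_
    have hji : B j i = B i j := by
      rw [show B j i = Bᵀ i j from rfl, hBT]
    rw [hji, sq]
  -- Claim 3 : bias bound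
  have ht2nonneg : 0 ≤ t2 :=
    Finset.sum_nonneg fun i _ => Finset.sum_nonneg fun j _ => sq_nonneg _
  have hclaim3 : (∑ i, c i ^ 2) ≤ σ ^ 2 * (lam * t2) := by
    have hcs : ∀ i, (B.mulVec wt i) ^ 2 ≤ (∑ j, (B i j) ^ 2) * (∑ j, (wt j) ^ 2) := by
      intro i
      have := Finset.sum_mul_sq_le_sq_mul_sq Finset.univ (fun j => B i j) wt
      simpa [Matrix.mulVec, dotProduct] using this
    have h1 : (∑ i, c i ^ 2) ≤ lam ^ 2 * (∑ i, ∑ j, (B i j) ^ 2) * (∑ j, (wt j) ^ 2) := by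
      have hc2 : (∑ i, c i ^ 2) = ∑ i, lam ^ 2 * (B.mulVec wt i) ^ 2 := by
        refine Finset.sum_congr rfl fun i _ => ?_
        simp only [hc]; ring
      have hrhs : lam ^ 2 * (∑ i, ∑ j, (B i j) ^ 2) * (∑ j, (wt j) ^ 2)
          = ∑ i, lam ^ 2 * ((∑ j, (B i j) ^ 2) * (∑ j, (wt j) ^ 2)) := by
        rw [mul_assoc, Finset.sum_mul, Finset.mul_sum]
      rw [hc2, hrhs]
      refine Finset.sum_le_sum fun i _ => ?_
      have := hcs i
      nlinarith [sq_nonneg lam]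
    have hwt : 0 ≤ ∑ j, (wt j) ^ 2 := Finset.sum_nonneg fun j _ => sq_nonneg _
    calc (∑ i, c i ^ 2) ≤ lam ^ 2 * t2 * (∑ j, (wt j) ^ 2) := h1
      _ = lam * t2 * (lam * ∑ j, (wt j) ^ 2) := by ring
      _ ≤ lam * t2 * σ ^ 2 := by
          exact mul_le_mul_of_nonneg_left hlw (by positivity)
      _ = σ ^ 2 * (lam * t2) := by ring
  -- combine
  rw [← hA, ← hB] at *
  rw [hLHS, Finset.sum_add_distrib]
  have := hclaim1
  have := hclaim3
  have := hclaim2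
  nlinarith [sq_nonneg σ]
end
end

section
/- Let d ≥ 1, n divisible by d, X ∈ ℝ^{n×d} consist of n/d stacked copies of the d×d identity matrix, σ > 0, w̃ = σ·1 ∈ ℝ^d, and y = Xw̃ + ξ with Var[ξ] = σ²I, E[ξ] = 0. Then for any subset S ⊆ {1..n} of size s and λ = 1, the ridge estimator w_λ*(S) = (X_S^⊤X_S + I)^{−1}X_S^⊤y_S satisfies E_ξ[(1/n)‖X(w_λ*(S) − w̃)‖²] = (σ²/d)·Σ_{i=1}^d 1/(s_i + 1) ≥ σ²d/(s + d), where s_i is the number of rows of X_S equal to e_i. -/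
open Matrix Finset

noncomputable section

open MeasureTheory

/-- The matrix consisting of `m` stacked copies of the `d × d` identity matrix:
row `k` equals the standard basis vector `e_{k mod d}`. -/
def Xstack (m d : ℕ) : Matrix (Fin (m * d)) (Fin d) ℝ :=
  Matrix.of fun k j => if (k : ℕ) % d = (j : ℕ) then 1 else 0

section Aux

variable {m d : ℕ}

/-- residue map -/
def res (m : ℕ) (hd : 0 < d) (k : Fin (m * d)) : Fin d := ⟨(k : ℕ) % d, Nat.mod_lt _ hd⟩

lemma Xstack_mulVec (hd : 0 < d) (v : Fin d → ℝ) (k : Fin (m * d)) :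
    (Xstack m d).mulVec v k = v (res m hd k) := by
  unfold Matrix.mulVec dotProduct Xstack
  simp only [Matrix.of_apply]
  rw [Finset.sum_congr rfl (g := fun j => if j = res m hd k then v j else 0)]
  · simp
  · intro j _
    by_cases h : (k : ℕ) % d = (j : ℕ)
    · rw [if_pos h, if_pos, one_mul]
      exact Fin.ext h.symm
    · rw [if_neg h, if_neg, zero_mul]
      intro hj; exact h (by rw [hj]; rfl)

lemma rowSubT_mulVec (S : Finset (Fin (m * d))) (v : Fin (m * d) → ℝ) (i : Fin d) :
    (rowSub (Xstack m d) S)ᵀ.mulVec (fun p : {x // x ∈ S} => v p.1) i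
      = ∑ k ∈ S.filter (fun k => k.val % d = i.val), v k := by
  unfold Matrix.mulVec dotProduct rowSub Xstack
  simp only [Matrix.transpose_apply, Matrix.submatrix_apply, Matrix.of_apply, id_eq]
  rw [Finset.sum_filter]
  rw [← Finset.sum_attach S (fun k => if (k : ℕ) % d = (i : ℕ) then v k else 0)]
  exact Finset.sum_congr rfl (fun p _ => by split <;> simp)

lemma gram_eq (S : Finset (Fin (m * d))) :
    gram (Xstack m d) S
      = Matrix.diagonal (fun i : Fin d =>
          ((S.filter (fun k => k.val % d = i.val)).card : ℝ)) := by
  ext i j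
  rw [_root_.gram, Matrix.mul_apply]
  have key : ∀ p : {x // x ∈ S},
      (rowSub (Xstack m d) S)ᵀ i p * rowSub (Xstack m d) S p j
        = if ((p : Fin (m*d)).val % d = i.val ∧ (p : Fin (m*d)).val % d = j.val)
            then (1:ℝ) else 0 := by
    intro p
    simp only [rowSub, Xstack, Matrix.transpose_apply, Matrix.submatrix_apply,
      Matrix.of_apply, id_eq]
    by_cases h1 : ((p : Fin (m*d)).val % d = i.val) <;>
      by_cases h2 : ((p : Fin (m*d)).val % d = j.val) <;> simp [h1, h2]
  rw [Finset.sum_congr rfl fun p _ => key p]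
  by_cases hij : i = j
  · subst hij
    rw [Matrix.diagonal_apply_eq]
    simp only [and_self]
    rw [Finset.univ_eq_attach,
      Finset.sum_attach S (fun k => if k.val % d = i.val then (1:ℝ) else 0),
      Finset.sum_boole]
  · rw [Matrix.diagonal_apply_ne _ hij]
    apply Finset.sum_eq_zero
    intro p _
    rw [if_neg]
    rintro ⟨h1, h2⟩
    exact hij (Fin.ext (h1.symm.trans h2))

lemma sum_res (hd : 0 < d) (g : Fin d → ℝ) :
    ∑ k : Fin (m * d), g (res m hd k) = m * ∑ i : Fin d, g i := by
  rw [← finProdFinEquiv.sum_comp (fun k => g (res m hd k))]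
  have : ∀ p : Fin m × Fin d, res m hd (finProdFinEquiv p) = p.2 := by
    intro p
    unfold res
    apply Fin.ext
    simp [finProdFinEquiv_apply_val, Nat.add_mul_mod_self_left, Nat.mod_eq_of_lt p.2.2]
  simp only [this]
  rw [Fintype.sum_prod_type]
  simp [Finset.sum_const, card_univ]

end Aux

/-- Lower bound construction: for `X` consisting of `m ≥ 1` stacked copies of the identity,
`w̃ = σ·1`, `y = Xw̃ + ξ` with `Var[ξ] = σ²I`, `λ = 1`, and any subset `S` of size `s`,
the ridge estimator satisfies
`E_ξ[(1/n)‖X(w_λ*(S) − w̃)‖²] = (σ²/d) Σ_{i=1}^d 1/(s_i+1) ≥ σ²d/(s+d)`,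
where `s_i` is the number of rows of `X_S` equal to `e_i`. -/
theorem ridge_mspe_lower_bound (m d : ℕ) (hm : 1 ≤ m) (hd : 1 ≤ d) (σ : ℝ) (hσ : 0 < σ)
    {Ω : Type*} [MeasurableSpace Ω] (μ : Measure Ω) [IsProbabilityMeasure μ]
    (ξ : Ω → Fin (m * d) → ℝ)
    (hint1 : ∀ i, Integrable (fun ω => ξ ω i) μ)
    (hint2 : ∀ i j, Integrable (fun ω => ξ ω i * ξ ω j) μ)
    (hmean : ∀ i, ∫ ω, ξ ω i ∂μ = 0)
    (hvar : ∀ i j, (∫ ω, ξ ω i * ξ ω j ∂μ) = if i = j then σ ^ 2 else 0)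
    (S : Finset (Fin (m * d))) :
    (∫ ω, (1 / ((m * d : ℕ) : ℝ)) *
        ∑ k, ((Xstack m d).mulVec
            ((gram (Xstack m d) S + (1 : Matrix (Fin d) (Fin d) ℝ))⁻¹.mulVec
              ((rowSub (Xstack m d) S)ᵀ.mulVec
                (fun p : {x // x ∈ S} =>
                  (Xstack m d).mulVec (fun _ => σ) p.1 + ξ ω p.1))) k
          - (Xstack m d).mulVec (fun _ => σ) k) ^ 2 ∂μ)
      = (σ ^ 2 / d) * ∑ i : Fin d,
          1 / (((S.filter (fun k => k.val % d = i.val)).card : ℝ) + 1)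
    ∧ (σ ^ 2 / d) * ∑ i : Fin d,
          1 / (((S.filter (fun k => k.val % d = i.val)).card : ℝ) + 1)
        ≥ σ ^ 2 * d / ((S.card : ℝ) + d) := by
  have hd0 : 0 < d := hd
  set s : Fin d → ℕ := fun i => (S.filter (fun k => k.val % d = i.val)).card with hs
  have hsi : ∀ i, (0:ℝ) < (s i : ℝ) + 1 := fun i => by positivity
  -- T
  set F : Fin d → Finset (Fin (m * d)) := fun i => S.filter (fun k => k.val % d = i.val)
    with hF
  set T : Ω → Fin d → ℝ := fun ω i => ∑ k ∈ F i, ξ ω k with hT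
  -- inverse matrix
  have hinv : (gram (Xstack m d) S + (1 : Matrix (Fin d) (Fin d) ℝ))⁻¹
      = Matrix.diagonal (fun i => ((s i : ℝ) + 1)⁻¹) := by
    have gram_eq' : gram (Xstack m d) S = Matrix.diagonal (fun i => (s i : ℝ)) := gram_eq S
    apply Matrix.inv_eq_right_inv
    rw [gram_eq', Matrix.add_mul, Matrix.one_mul, Matrix.diagonal_mul_diagonal]
    ext i j
    by_cases hij : i = j
    · subst hij
      simp only [Matrix.add_apply, Matrix.diagonal_apply_eq, Matrix.one_apply_eq]
      have h := (hsi i).ne'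
      field_simp
    · simp only [Matrix.add_apply, Matrix.diagonal_apply_ne _ hij,
        Matrix.one_apply_ne hij, add_zero]
  -- pointwise rewrite
  have hpt : ∀ ω, (1 / ((m * d : ℕ) : ℝ)) *
        ∑ k, ((Xstack m d).mulVec
            ((gram (Xstack m d) S + (1 : Matrix (Fin d) (Fin d) ℝ))⁻¹.mulVec
              ((rowSub (Xstack m d) S)ᵀ.mulVec
                (fun p : {x // x ∈ S} =>
                  (Xstack m d).mulVec (fun _ => σ) p.1 + ξ ω p.1))) k
          - (Xstack m d).mulVec (fun _ => σ) k) ^ 2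
      = (1 / ((m * d : ℕ) : ℝ)) * (m * ∑ i : Fin d, ((T ω i - σ) / ((s i : ℝ) + 1)) ^ 2) := by
    intro ω
    congr 1
    have h1 : ∀ p : {x // x ∈ S},
        (Xstack m d).mulVec (fun _ => σ) p.1 + ξ ω p.1 = σ + ξ ω p.1 := by
      intro p; rw [Xstack_mulVec hd0]
    have h2 : (rowSub (Xstack m d) S)ᵀ.mulVec
        (fun p : {x // x ∈ S} => (Xstack m d).mulVec (fun _ => σ) p.1 + ξ ω p.1)
        = fun i => (s i : ℝ) * σ + T ω i := by
      funext i
      calc (rowSub (Xstack m d) S)ᵀ.mulVec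
            (fun p : {x // x ∈ S} => (Xstack m d).mulVec (fun _ => σ) p.1 + ξ ω p.1) i
          = (rowSub (Xstack m d) S)ᵀ.mulVec
            (fun p : {x // x ∈ S} => σ + ξ ω p.1) i := by
            congr 1; funext p; exact h1 p
        _ = ∑ k ∈ F i, (σ + ξ ω k) := rowSubT_mulVec S (fun k => σ + ξ ω k) i
        _ = (s i : ℝ) * σ + T ω i := by
            rw [Finset.sum_add_distrib, Finset.sum_const, hT, hF, hs]
            simp [nsmul_eq_mul]
    rw [h2, hinv]
    have h3 : (Matrix.diagonal (fun i => ((s i : ℝ) + 1)⁻¹)).mulVec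
        (fun i => (s i : ℝ) * σ + T ω i)
        = fun i => ((s i : ℝ) * σ + T ω i) / ((s i : ℝ) + 1) := by
      funext i
      rw [Matrix.mulVec_diagonal]
      rw [inv_mul_eq_div]
    rw [h3]
    have h4 : ∀ k, ((Xstack m d).mulVec
        (fun i => ((s i : ℝ) * σ + T ω i) / ((s i : ℝ) + 1)) k
          - (Xstack m d).mulVec (fun _ => σ) k) ^ 2
        = (fun i => ((T ω i - σ) / ((s i : ℝ) + 1)) ^ 2) (res m hd0 k) := by
      intro k
      rw [Xstack_mulVec hd0, Xstack_mulVec hd0]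
      congr 1
      set i := res m hd0 k
      field_simp
      ring
    rw [Finset.sum_congr rfl (fun k _ => h4 k)]
    exact sum_res (m := m) hd0 (fun i => ((T ω i - σ) / ((s i : ℝ) + 1)) ^ 2)
  rw [MeasureTheory.integral_congr_ae (Filter.Eventually.of_forall hpt)]
  -- integrability of each term
  have hTint : ∀ i, Integrable (fun ω => T ω i) μ := by
    intro i
    exact integrable_finset_sum _ (fun k _ => hint1 k)
  have hT2int : ∀ i, Integrable (fun ω => (T ω i - σ) ^ 2) μ := by
    intro i
    have : (fun ω => (T ω i - σ) ^ 2)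
        = fun ω => (∑ k ∈ F i, ∑ l ∈ F i, ξ ω k * ξ ω l) - 2 * σ * T ω i + σ ^ 2 := by
      funext ω
      have hsq : (∑ k ∈ F i, ξ ω k) ^ 2 = ∑ k ∈ F i, ∑ l ∈ F i, ξ ω k * ξ ω l := by
        rw [sq, Finset.sum_mul_sum]
      simp only [hT]
      rw [sub_sq, hsq]
      ring
    rw [this]
    apply Integrable.add
    · apply Integrable.sub
      · exact integrable_finset_sum _ (fun k _ =>
          integrable_finset_sum _ (fun l _ => hint2 k l))
      · exact ((hTint i).const_mul _)
    · exact integrable_const _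
  have hterm : ∀ i, Integrable (fun ω => ((T ω i - σ) / ((s i : ℝ) + 1)) ^ 2) μ := by
    intro i
    have : (fun ω => ((T ω i - σ) / ((s i : ℝ) + 1)) ^ 2)
        = fun ω => ((T ω i - σ) ^ 2) * (((s i : ℝ) + 1)⁻¹) ^ 2 := by
      funext ω; rw [div_pow]; rw [div_eq_mul_inv, inv_pow]
    rw [this]
    exact (hT2int i).mul_const _
  -- expectation of each term
  have hET : ∀ i, ∫ ω, T ω i ∂μ = 0 := by
    intro i
    rw [hT]
    rw [integral_finset_sum _ (fun k _ => hint1 k)]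
    exact Finset.sum_eq_zero (fun k _ => hmean k)
  have hET2 : ∀ i, ∫ ω, (T ω i - σ) ^ 2 ∂μ = σ ^ 2 * ((s i : ℝ) + 1) := by
    intro i
    have hexp : (fun ω => (T ω i - σ) ^ 2)
        = fun ω => (∑ k ∈ F i, ∑ l ∈ F i, ξ ω k * ξ ω l) - 2 * σ * T ω i + σ ^ 2 := by
      funext ω
      have hsq : (∑ k ∈ F i, ξ ω k) ^ 2 = ∑ k ∈ F i, ∑ l ∈ F i, ξ ω k * ξ ω l := by
        rw [sq, Finset.sum_mul_sum]
      simp only [hT]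
      rw [sub_sq, hsq]
      ring
    rw [hexp]
    rw [integral_add, integral_sub, integral_finset_sum _ (fun k _ =>
      integrable_finset_sum _ (fun l _ => hint2 k l))]
    · have : ∀ k ∈ F i, ∫ ω, ∑ l ∈ F i, ξ ω k * ξ ω l ∂μ
          = ∑ l ∈ F i, if k = l then σ ^ 2 else 0 := by
        intro k _
        rw [integral_finset_sum _ (fun l _ => hint2 k l)]
        exact Finset.sum_congr rfl (fun l _ => hvar k l)
      rw [Finset.sum_congr rfl this]
      have : ∀ k ∈ F i, (∑ l ∈ F i, if k = l then σ ^ 2 else 0) = σ ^ 2 := by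
        intro k hk
        rw [Finset.sum_ite_eq (F i) k (fun _ => σ ^ 2), if_pos hk]
      rw [Finset.sum_congr rfl this, Finset.sum_const]
      rw [integral_const_mul, hET i, integral_const]
      simp only [measure_univ, probReal_univ, ENNReal.toReal_one, smul_eq_mul, one_mul, mul_zero, sub_zero]
      rw [nsmul_eq_mul]
      have : ((F i).card : ℝ) = (s i : ℝ) := by rw [hF, hs]
      rw [this]; ring
    · exact integrable_finset_sum _ (fun k _ =>
        integrable_finset_sum _ (fun l _ => hint2 k l))
    · exact ((hTint i).const_mul _)
    · apply Integrable.sub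
      · exact integrable_finset_sum _ (fun k _ =>
          integrable_finset_sum _ (fun l _ => hint2 k l))
      · exact ((hTint i).const_mul _)
    · exact integrable_const _
  -- compute the integral
  have hm0 : (0:ℝ) < (m:ℝ) := by exact_mod_cast hm
  have hd0' : (0:ℝ) < (d:ℝ) := by exact_mod_cast hd
  have hEq : (∫ ω, (1 / ((m * d : ℕ) : ℝ)) *
        (m * ∑ i : Fin d, ((T ω i - σ) / ((s i : ℝ) + 1)) ^ 2) ∂μ)
      = (σ ^ 2 / d) * ∑ i : Fin d, 1 / ((s i : ℝ) + 1) := by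
    rw [integral_const_mul, integral_const_mul,
      integral_finset_sum _ (fun i _ => hterm i)]
    have : ∀ i ∈ (Finset.univ : Finset (Fin d)),
        ∫ ω, ((T ω i - σ) / ((s i : ℝ) + 1)) ^ 2 ∂μ = 1 / ((s i : ℝ) + 1) * σ ^ 2 := by
      intro i _
      have : (fun ω => ((T ω i - σ) / ((s i : ℝ) + 1)) ^ 2)
          = fun ω => ((T ω i - σ) ^ 2) / (((s i : ℝ) + 1) ^ 2) := by
        funext ω; rw [div_pow]
      rw [this, integral_div, hET2 i]
      field_simp
    rw [Finset.sum_congr rfl this]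
    rw [← Finset.sum_mul]
    push_cast
    field_simp
  constructor
  · exact hEq
  · -- Cauchy-Schwarz lower bound
    have hcard : (S.card : ℝ) = ∑ i : Fin d, (s i : ℝ) := by
      have := Finset.card_eq_sum_card_fiberwise
        (f := fun k : Fin (m * d) => res m hd0 k) (s := S) (t := Finset.univ)
        (fun x _ => Finset.mem_univ _)
      rw [this]
      push_cast
      apply Finset.sum_congr rfl
      intro i _
      have heq : S.filter (fun a => res m hd0 a = i) = S.filter (fun k => k.val % d = i.val) :=
        Finset.filter_congr (fun x _ => by simp [res, Fin.ext_iff])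
      rw [heq]
    have hCS : ((d:ℝ)) ^ 2 ≤ ((S.card : ℝ) + d) * ∑ i : Fin d, 1 / ((s i : ℝ) + 1) := by
      have := Finset.sum_mul_sq_le_sq_mul_sq Finset.univ
        (fun i : Fin d => Real.sqrt ((s i : ℝ) + 1))
        (fun i : Fin d => 1 / Real.sqrt ((s i : ℝ) + 1))
      have h1 : ∀ i : Fin d, Real.sqrt ((s i : ℝ) + 1) * (1 / Real.sqrt ((s i : ℝ) + 1)) = 1 := by
        intro i
        rw [mul_one_div, div_self (Real.sqrt_ne_zero'.mpr (hsi i))]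
      have h2 : ∀ i : Fin d, (Real.sqrt ((s i : ℝ) + 1)) ^ 2 = (s i : ℝ) + 1 := fun i =>
        Real.sq_sqrt (hsi i).le
      have h3 : ∀ i : Fin d, (1 / Real.sqrt ((s i : ℝ) + 1)) ^ 2 = 1 / ((s i : ℝ) + 1) := by
        intro i
        rw [div_pow, one_pow, h2 i]
      simp only [h1, h2, h3, Finset.sum_const, card_univ, Fintype.card_fin, nsmul_eq_mul,
        mul_one] at this
      calc ((d:ℝ)) ^ 2 = ((d:ℝ) * 1) ^ 2 := by ring
        _ ≤ (∑ i : Fin d, ((s i : ℝ) + 1)) * ∑ i : Fin d, 1 / ((s i : ℝ) + 1) := by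
            rw [mul_one]; exact this
        _ = ((S.card : ℝ) + d) * ∑ i : Fin d, 1 / ((s i : ℝ) + 1) := by
            rw [Finset.sum_add_distrib, Finset.sum_const, card_univ, Fintype.card_fin,
              nsmul_eq_mul, mul_one, hcard]
    have hQ : (0:ℝ) < (S.card : ℝ) + d := by positivity
    rw [ge_iff_le, div_le_iff₀ hQ]
    have hP : (0:ℝ) ≤ ∑ i : Fin d, 1 / ((s i : ℝ) + 1) := by
      apply Finset.sum_nonneg; intro i _; positivity
    have key : σ ^ 2 / d * ((d:ℝ)) ^ 2
        ≤ σ ^ 2 / d * (((S.card : ℝ) + d) * ∑ i : Fin d, 1 / ((s i : ℝ) + 1)) :=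
      mul_le_mul_of_nonneg_left hCS (by positivity)
    calc σ ^ 2 * (d:ℝ) = σ ^ 2 / d * (d:ℝ) ^ 2 := by field_simp
      _ ≤ σ ^ 2 / d * (((S.card : ℝ) + d) * ∑ i : Fin d, 1 / ((s i : ℝ) + 1)) := key
      _ = σ ^ 2 / d * (∑ i : Fin d, 1 / ((s i : ℝ) + 1)) * ((S.card : ℝ) + d) := by ring
end
end
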